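/- Let X be a Banach space and W a bounded, circled (i.e. λW ⊆ W whenever |λ| ≤ 1), closed, convex subset of X with empty interior. Then for every ε > 0 the set W_ε = {x ∈ X : dist(x, W) ≤ ε} contains no ball of radius larger than ε. -/

import Mathlib

open Metric EMetric Set Filter Pointwise


/-- Let `X` be a Banach space (real or complex, with scalar field `𝕜`) and `W` a bounded,
circled, closed, convex subset of `X` with empty interior.  Then for every `ε > 0` the set
`W_ε = {x : dist(x, W) ≤ ε}` contains no ball of radius larger than `ε`.
(The distance to `W` is expressed via `infEdist`, which equals `∞` for `W = ∅`,
matching the convention `inf ∅ = ∞`.) -/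
theorem stmt_8 {𝕜 X : Type*} [RCLike 𝕜]
    [NormedAddCommGroup X] [NormedSpace ℝ X] [NormedSpace 𝕜 X] [IsScalarTower ℝ 𝕜 X]
    [CompleteSpace X]
    (W : Set X) (hbdd : Bornology.IsBounded W)
    (hcircled : ∀ c : 𝕜, ‖c‖ ≤ 1 → ∀ w ∈ W, c • w ∈ W)
    (hclosed : IsClosed W) (hconv : Convex ℝ W)
    (hint : interior W = ∅)
    (ε : ℝ) (hε : 0 < ε) (c : X) (r : ℝ) (hr : ε < r) :
    ¬ Metric.closedBall c r ⊆ {x : X | EMetric.infEdist x W ≤ ENNReal.ofReal ε} := by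
  intro h
  have hr0 : 0 < r := hε.trans hr
  have hsub : Metric.closedBall c r ⊆ Metric.cthickening ε W := h
  -- W is nonempty
  rcases W.eq_empty_or_nonempty with hW | ⟨w0, hw0⟩
  · have := hsub (Metric.mem_closedBall_self hr0.le)
    rw [hW, Metric.cthickening_empty] at this
    exact this
  have h0W : (0:X) ∈ W := by simpa using hcircled 0 (by simp) w0 hw0
  have hWneg : ∀ x ∈ W, -x ∈ W := fun x hx => by
    simpa using hcircled (-1) (by simp) x hx
  have hWneg' : Neg.neg '' W = W := by
    ext x
    constructor
    · rintro ⟨y, hy, rfl⟩; exact hWneg y hy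
    · intro hx; exact ⟨-x, hWneg x hx, neg_neg x⟩
  have hreal : ∀ t : ℝ, |t| ≤ 1 → ∀ w ∈ W, t • w ∈ W := by
    intro t ht w hw
    have := hcircled (algebraMap ℝ 𝕜 t) (by rw [norm_algebraMap']; simpa using ht) w hw
    rwa [algebraMap_smul] at this
  have hCconv : Convex ℝ (Metric.cthickening ε W) := hconv.cthickening ε
  have hCsym : ∀ x ∈ Metric.cthickening ε W, -x ∈ Metric.cthickening ε W := by
    intro x hx
    have hinf : EMetric.infEdist (-x) W = EMetric.infEdist x W := by
      conv_lhs => rw [← hWneg']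
      exact EMetric.infEdist_image isometry_neg
    exact (le_of_eq hinf).trans hx
  -- the ball around 0 is in the cthickening
  have hball : ∀ x : X, ‖x‖ ≤ r → x ∈ Metric.cthickening ε W := by
    intro x hx
    have h1 : c + x ∈ Metric.cthickening ε W := by
      apply hsub
      simp only [Metric.mem_closedBall, dist_eq_norm]
      simpa using hx
    have h2 : x - c ∈ Metric.cthickening ε W := by
      have h3 : c - x ∈ Metric.closedBall c r := by
        simp only [Metric.mem_closedBall, dist_eq_norm]
        simpa [norm_sub_rev] using hx
      have := hCsym _ (hsub h3)
      simpa [neg_sub] using this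
    have := hCconv h1 h2 (by norm_num : (0:ℝ) ≤ 1/2) (by norm_num : (0:ℝ) ≤ 1/2)
      (by norm_num)
    have heq : (1/2 : ℝ) • (c + x) + (1/2 : ℝ) • (x - c) = x := by module
    rwa [heq] at this
  -- step: ε < ρ < r
  set ρ : ℝ := (ε + r) / 2 with hρdef
  have hρ0 : 0 < ρ := by positivity
  have hρε : ε < ρ := by rw [hρdef]; linarith
  have hρr : ρ < r := by rw [hρdef]; linarith
  have step : ∀ y : X, ‖y‖ ≤ r → ∃ w ∈ W, ‖y - w‖ < ρ := by
    intro y hy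
    have : y ∈ Metric.thickening ρ W :=
      Metric.cthickening_subset_thickening' hρ0 hρε W (hball y hy)
    rw [Metric.mem_thickening_iff] at this
    obtain ⟨w, hw, hd⟩ := this
    exact ⟨w, hw, by rwa [dist_eq_norm] at hd⟩
  choose! g hgW hgd using step
  set q : ℝ := ρ / r with hqdef
  have hq0 : 0 < q := by positivity
  have hq1 : q < 1 := by rw [hqdef]; exact (div_lt_one hr0).2 hρr
  set S : ℝ := (1 - q)⁻¹ with hSdef
  have hS0 : 0 < S := by rw [hSdef]; exact inv_pos.2 (by linarith)
  -- main claim: closedBall 0 r ⊆ S • W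
  have hfinal : ∀ x : X, ‖x‖ ≤ r → x ∈ S • W := by
    intro x hx
    set seq : ℕ → X := fun n => Nat.rec x (fun _ y => (r/ρ) • (y - g y)) n with hseqdef
    have hseqS : ∀ n, seq (n+1) = (r/ρ) • (seq n - g (seq n)) := fun n => rfl
    have hnorm : ∀ n, ‖seq n‖ ≤ r := by
      intro n
      induction n with
      | zero => exact hx
      | succ n ih =>
        rw [hseqS, norm_smul]
        have hd := (hgd (seq n) ih).le
        calc ‖(r/ρ : ℝ)‖ * ‖seq n - g (seq n)‖ ≤ (r/ρ) * ρ := by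
              apply mul_le_mul _ hd (norm_nonneg _) (by positivity)
              rw [Real.norm_eq_abs, abs_of_pos (by positivity)]
          _ = r := by field_simp
    set s : ℕ → X := fun n => ∑ k ∈ Finset.range n, q^k • g (seq k) with hsdef
    have hid : ∀ n, s n + q^n • seq n = x := by
      intro n
      induction n with
      | zero =>
        show (∑ k ∈ Finset.range 0, q^k • g (seq k)) + q^0 • x = x
        simp
      | succ n ih =>
        have h1 : s (n+1) = s n + q^n • g (seq n) := by
          rw [hsdef]; exact Finset.sum_range_succ _ _
        have h2 : q^(n+1) • seq (n+1) = q^n • seq n - q^n • g (seq n) := by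
          rw [hseqS, smul_smul, ← smul_sub]
          congr 1
          rw [hqdef]
          field_simp
          rw [pow_succ, mul_comm, mul_assoc, div_mul_cancel₀ ρ hr0.ne', mul_comm]
        rw [h1, h2, ← ih]
        abel
    have hmem : ∀ n, s n ∈ (∑ k ∈ Finset.range n, q^k) • W := by
      intro n
      induction n with
      | zero => simp [hsdef, Set.zero_smul_set ⟨w0, hw0⟩]
      | succ n ih =>
        have h1 : (∑ k ∈ Finset.range (n+1), q^k) • W
            = (∑ k ∈ Finset.range n, q^k) • W + q^n • W := by
          rw [Finset.sum_range_succ]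
          exact hconv.add_smul (Finset.sum_nonneg fun k _ => by positivity)
            (by positivity)
        rw [h1]
        have h2 : s (n+1) = s n + q^n • g (seq n) := by
          rw [hsdef]; exact Finset.sum_range_succ _ _
        rw [h2]
        exact Set.add_mem_add ih (Set.smul_mem_smul_set (hgW (seq n) (hnorm n)))
    have hmemS : ∀ n, s n ∈ S • W := by
      intro n
      obtain ⟨w, hw, hsw⟩ := hmem n
      set a : ℝ := ∑ k ∈ Finset.range n, q^k with hadef
      have ha0 : 0 ≤ a := Finset.sum_nonneg fun k _ => by positivity
      have haS : a ≤ S := by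
        rw [hSdef]
        have := Summable.sum_le_tsum (Finset.range n) (fun k _ => by positivity)
          (summable_geometric_of_lt_one hq0.le hq1)
        rwa [tsum_geometric_of_lt_one hq0.le hq1] at this
      have habs : |a / S| ≤ 1 := by
        rw [abs_of_nonneg (by positivity)]
        exact (div_le_one hS0).2 haS
      refine ⟨(a / S) • w, hreal _ habs w hw, ?_⟩
      show S • ((a / S) • w) = s n
      rw [smul_smul, mul_div_cancel₀ _ hS0.ne']
      exact hsw
    have hlim : Tendsto s atTop (nhds x) := by
      rw [tendsto_iff_norm_sub_tendsto_zero]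
      have hb : ∀ n, ‖s n - x‖ ≤ r * q^n := by
        intro n
        have : s n - x = -(q^n • seq n) := by
          rw [← hid n]; abel
        rw [this, norm_neg, norm_smul, Real.norm_eq_abs, abs_of_pos (by positivity),
          mul_comm]
        exact mul_le_mul_of_nonneg_right (hnorm n) (by positivity)
      have h0 : Tendsto (fun n : ℕ => r * q^n) atTop (nhds 0) := by
        simpa using (tendsto_pow_atTop_nhds_zero_of_lt_one hq0.le hq1).const_mul r
      exact squeeze_zero (fun n => norm_nonneg _) hb h0
    exact (hclosed.smul_of_ne_zero hS0.ne').mem_of_tendsto hlim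
      (Eventually.of_forall hmemS)
  -- derive nonempty interior
  have hWball : Metric.closedBall (0:X) (r / S) ⊆ W := by
    intro z hz
    have hz' : ‖S • z‖ ≤ r := by
      rw [norm_smul, Real.norm_eq_abs, abs_of_pos hS0]
      have : ‖z‖ ≤ r / S := by simpa [Metric.mem_closedBall, dist_eq_norm] using hz
      calc S * ‖z‖ ≤ S * (r / S) := by nlinarith [norm_nonneg z]
        _ = r := by field_simp
    obtain ⟨w, hw, hsw⟩ := hfinal _ hz'
    have : w = z := smul_right_injective X hS0.ne' hsw
    rwa [← this]
  have : (0:X) ∈ interior W :=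
    mem_interior_iff_mem_nhds.2 (Filter.mem_of_superset
      (Metric.closedBall_mem_nhds 0 (by positivity)) hWball)
  rw [hint] at this
  exact this
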